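/- Let (P, μ) be a measure space, and let x : ℝ → P → ℝ be a parameterized family of real-valued functions. Define the partition function Z(θ) = ∫ exp(x(θ, p)) dμ(p). Suppose there is a parameter value θ₀ and a radius ε > 0 such that: (i) for each θ in the ball of radius ε around θ₀, the function p ↦ exp(x(θ, p)) is μ-integrable; (ii) for μ-almost every p, the map θ ↦ x(θ, p) is differentiable at every θ in that ball with derivative ∂x/∂θ(θ, p); (iii) there is a μ-integrable function g : P → ℝ bounding |∂x/∂θ(θ, p) · exp(x(θ, p))| ≤ g(p) for all θ in the ball and μ-almost every p; (iv) the map p ↦ ∂x/∂θ(θ₀, p) · exp(x(θ₀, p)) is μ-measurable; and (v) Z(θ₀) > 0. Then the function θ ↦ log Z(θ) is differentiable at θ₀, and its derivative equals ∫ ∂x/∂θ(θ₀, p) · q̂(p) dμ(p), where q̂(p) = exp(x(θ₀, p)) / Z(θ₀) is the normalized model density. -/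

import Mathlib

open MeasureTheory Real

open MeasureTheory Real Filter Topology

lemma aux_sigmaFinite {P : Type*} [MeasurableSpace P] {μ : Measure P} {f : P → ℝ}
    (hf : Integrable f μ) (hpos : ∀ p, 0 < f p) : SigmaFinite μ := by
  obtain ⟨h, hmeas, heq⟩ : ∃ h : P → ℝ, Measurable h ∧ f =ᵐ[μ] h :=
    ⟨hf.1.mk, hf.1.stronglyMeasurable_mk.measurable, hf.1.ae_eq_mk⟩
  have hint : Integrable h μ := hf.congr heq
  have hnull : μ {p | ¬ 0 < h p} = 0 := by
    have : ∀ᵐ p ∂μ, 0 < h p := heq.symm.mono fun p hp => hp ▸ hpos p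
    simpa [ae_iff] using this
  refine ⟨⟨⟨fun n => {p | 1/(n+1 : ℝ) ≤ ‖h p‖} ∪ {p | ¬ 0 < h p}, fun _ => trivial, fun n => ?_, ?_⟩⟩⟩
  · refine lt_of_le_of_lt (measure_union_le _ _) ?_
    rw [hnull, add_zero]
    exact hint.measure_norm_ge_lt_top (by positivity)
  · ext p
    simp only [Set.mem_iUnion, Set.mem_union, Set.mem_setOf_eq, Set.mem_univ, iff_true]
    by_cases hp : 0 < h p
    · obtain ⟨n, hn⟩ := exists_nat_one_div_lt hp
      exact ⟨n, Or.inl (by rw [Real.norm_eq_abs, abs_of_pos hp]; exact hn.le)⟩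
    · exact ⟨0, Or.inr hp⟩

lemma aux_ae_prod_snd {α β : Type*} [MeasurableSpace α] [MeasurableSpace β]
    (ρ : Measure α) (μ : Measure β) [SFinite μ] {Q : β → Prop} (h : ∀ᵐ p ∂μ, Q p) :
    ∀ᵐ q ∂(ρ.prod μ), Q q.2 := by
  obtain ⟨N, hsub, hNm, hN0⟩ := exists_measurable_superset_of_null (ae_iff.mp h)
  rw [ae_iff]
  refine measure_mono_null (fun q hq => ?_) (show ρ.prod μ (Set.univ ×ˢ N) = 0 by
    rw [Measure.prod_prod, hN0, mul_zero])
  exact ⟨trivial, hsub hq⟩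

lemma aux_ae_prod_fst {α β : Type*} [MeasurableSpace α] [MeasurableSpace β]
    (ρ : Measure α) (μ : Measure β) [SFinite μ] {Q : α → Prop} (h : ∀ᵐ t ∂ρ, Q t) :
    ∀ᵐ q ∂(ρ.prod μ), Q q.1 := by
  obtain ⟨N, hsub, hNm, hN0⟩ := exists_measurable_superset_of_null (ae_iff.mp h)
  rw [ae_iff]
  refine measure_mono_null (fun q hq => ?_) (show ρ.prod μ (N ×ˢ Set.univ) = 0 by
    rw [Measure.prod_prod, hN0, zero_mul])
  exact ⟨hsub hq, trivial⟩


lemma aux_key_meas {P : Type*} [MeasurableSpace P] {μ : Measure P} [SFinite μ]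
    {x : ℝ → P → ℝ} {θ₀ ε : ℝ}
    (hint : ∀ θ ∈ Metric.ball θ₀ ε, Integrable (fun p => Real.exp (x θ p)) μ)
    (hcont : ∀ᵐ p ∂μ, ∀ θ ∈ Metric.ball θ₀ ε, ContinuousAt (fun θ' => x θ' p) θ)
    (w : ℝ → ℝ) (hw : Measurable w) (hwb : ∀ t ∈ Metric.ball θ₀ ε, w t ∈ Metric.ball θ₀ ε) :
    AEMeasurable (fun q : ℝ × P => Real.exp (x (w q.1) q.2))
      ((volume.restrict (Metric.ball θ₀ ε)).prod μ) := by
  set B := Metric.ball θ₀ ε with hB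
  set ν := (volume.restrict B).prod μ with hν
  -- grid points
  set c : ℕ → ℤ → ℝ := fun n j => θ₀ + (j : ℝ)/(n+1) with hc
  -- measurable representatives at grid points
  classical
  have hm : ∃ m : ℕ → ℤ → P → ℝ, (∀ n j, Measurable (m n j)) ∧
      (∀ n j, c n j ∈ B → (fun p => Real.exp (x (c n j) p)) =ᵐ[μ] m n j) := by
    refine ⟨fun n j => if h : c n j ∈ B then (hint _ h).1.mk _ else fun _ => 0,
      fun n j => ?_, fun n j h => ?_⟩
    · by_cases h : c n j ∈ B
      · simpa [h] using ((hint _ h).1.stronglyMeasurable_mk).measurable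
      · simpa [h] using measurable_const
    · simpa [h] using (hint _ h).1.ae_eq_mk
  obtain ⟨m, hm_meas, hm_eq⟩ := hm
  -- rounding
  set r : ℕ → ℝ → ℤ := fun n t => round ((t - θ₀) * (n+1)) with hr
  have hr_meas : ∀ n, Measurable (r n) := by
    intro n
    have : r n = fun t => ⌊(t - θ₀) * (n+1) + 1/2⌋ := funext fun t => round_eq _
    rw [this]
    exact (((measurable_id.sub_const _).mul_const _).add_const _).floor
  -- approximants
  set G : ℕ → ℝ × P → ℝ := fun n q => m n (r n (w q.1)) q.2 with hG
  have hG_meas : ∀ n, Measurable (G n) := by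
    intro n
    have : Measurable fun q : P × ℤ => m n q.2 q.1 :=
      measurable_from_prod_countable_left (fun j => hm_meas n j)
    exact this.comp (measurable_snd.prodMk ((hr_meas n).comp (hw.comp measurable_fst)))
  -- convergence of grid points
  have hgrid : ∀ t : ℝ, Tendsto (fun n => c n (r n t)) atTop (𝓝 t) := by
    intro t
    rw [tendsto_iff_dist_tendsto_zero]
    have hle : ∀ n : ℕ, dist (c n (r n t)) t ≤ (1/2) * (1/(n+1)) := by
      intro n
      rw [Real.dist_eq, hc, hr]
      have h1 : (0:ℝ) < n + 1 := by positivity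
      have : θ₀ + (round ((t - θ₀) * (n+1)) : ℝ)/(n+1) - t
          = ((round ((t - θ₀) * (n+1)) : ℝ) - (t - θ₀) * (n+1))/(n+1) := by
        field_simp
        ring
      rw [this, abs_div, abs_of_pos h1, div_le_iff₀ h1]
      calc |(round ((t - θ₀) * (n+1)) : ℝ) - (t - θ₀) * (n+1)| ≤ 1/2 := by
            rw [abs_sub_comm]; exact abs_sub_round _
        _ = 1/2 * (1/(n+1)) * (n+1) := by field_simp
    refine squeeze_zero (fun n => dist_nonneg) hle ?_
    have : Tendsto (fun n : ℕ => 1 / ((n : ℝ) + 1)) atTop (𝓝 0) :=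
      tendsto_one_div_add_atTop_nhds_zero_nat
    simpa using (tendsto_const_nhds (x := (1/2:ℝ))).mul this
  -- a.e. convergence
  have hae : ∀ᵐ q ∂ν, Tendsto (fun n => G n q) atTop (𝓝 (Real.exp (x (w q.1) q.2))) := by
    have h1 : ∀ᵐ q ∂ν, q.1 ∈ B :=
      aux_ae_prod_fst _ _ (ae_restrict_mem measurableSet_ball)
    have h2 : ∀ᵐ p ∂μ, (∀ n : ℕ, ∀ j : ℤ, c n j ∈ B → Real.exp (x (c n j) p) = m n j p) ∧
        (∀ θ ∈ B, ContinuousAt (fun θ' => x θ' p) θ) := by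
      refine ((ae_all_iff.2 fun n => ae_all_iff.2 fun j => ?_).and hcont)
      by_cases h : c n j ∈ B
      · exact (hm_eq n j h).mono fun p hp _ => hp
      · exact ae_of_all _ fun p hcon => absurd hcon h
    filter_upwards [h1, aux_ae_prod_snd _ _ h2] with q hq1 hq2
    obtain ⟨hq2a, hq2b⟩ := hq2
    set t := w q.1 with ht
    have htB : t ∈ B := hwb _ hq1
    have hconv : Tendsto (fun n => c n (r n t)) atTop (𝓝 t) := hgrid t
    have hev : ∀ᶠ n in atTop, c n (r n t) ∈ B :=
      hconv.eventually (Metric.isOpen_ball.mem_nhds htB)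
    have hc2 : ContinuousAt (fun θ' => Real.exp (x θ' q.2)) t :=
      Real.continuous_exp.continuousAt.comp (hq2b t htB)
    have h3 : Tendsto (fun n => Real.exp (x (c n (r n t)) q.2)) atTop
        (𝓝 (Real.exp (x t q.2))) := hc2.tendsto.comp hconv
    refine h3.congr' ?_
    filter_upwards [hev] with n hn
    exact hq2a n (r n t) hn
  exact aemeasurable_of_tendsto_metrizable_ae _ (fun n => (hG_meas n).aemeasurable) hae

/-- **Gradient of the log partition function.**
For a parameterized family of scores `x θ p` with partition function
`Z θ = ∫ exp (x θ p) dμ p`, under a dominated-derivative hypothesis the map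
`θ ↦ log (Z θ)` is differentiable at `θ₀` with derivative
`∫ ∂x/∂θ(θ₀, p) · q̂ p dμ p`, where `q̂ p = exp (x θ₀ p) / Z θ₀`. -/
theorem grad_log_partition
    {P : Type*} [MeasurableSpace P] (μ : Measure P)
    (x x' : ℝ → P → ℝ) (θ₀ ε : ℝ) (hε : 0 < ε)
    (hint : ∀ θ ∈ Metric.ball θ₀ ε, Integrable (fun p => Real.exp (x θ p)) μ)
    (hderiv : ∀ᵐ p ∂μ, ∀ θ ∈ Metric.ball θ₀ ε,
      HasDerivAt (fun θ' => x θ' p) (x' θ p) θ)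
    (g : P → ℝ) (hg : Integrable g μ)
    (hbound : ∀ θ ∈ Metric.ball θ₀ ε,
      ∀ᵐ p ∂μ, |x' θ p * Real.exp (x θ p)| ≤ g p)
    (hmeas : AEStronglyMeasurable (fun p => x' θ₀ p * Real.exp (x θ₀ p)) μ)
    (hZ : 0 < ∫ p, Real.exp (x θ₀ p) ∂μ) :
    HasDerivAt (fun θ => Real.log (∫ p, Real.exp (x θ p) ∂μ))
      (∫ p, x' θ₀ p * (Real.exp (x θ₀ p) / (∫ q, Real.exp (x θ₀ q) ∂μ)) ∂μ)
      θ₀ := by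
  have hθ₀B : θ₀ ∈ Metric.ball θ₀ ε := Metric.mem_ball_self hε
  haveI : SigmaFinite μ := aux_sigmaFinite (hint θ₀ hθ₀B) (fun p => Real.exp_pos _)
  set B := Metric.ball θ₀ ε with hBdef
  set ρ := (volume : Measure ℝ).restrict B with hρ
  set ν := ρ.prod μ with hν
  have hcont : ∀ᵐ p ∂μ, ∀ θ ∈ B, ContinuousAt (fun θ' => x θ' p) θ :=
    hderiv.mono fun p hp θ hθ => (hp θ hθ).continuousAt
  -- joint a.e.-measurability of (t,p) ↦ exp (x t p)
  have hF : AEMeasurable (fun q : ℝ × P => Real.exp (x q.1 q.2)) ν :=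
    aux_key_meas hint hcont id measurable_id (fun t ht => ht)
  -- shifts
  set e : ℕ → ℝ := fun n => ε/(n+2) with he
  have he_pos : ∀ n, 0 < e n := fun n => by positivity
  have he_lt : ∀ n, e n < ε := by
    intro n
    rw [he, div_lt_iff₀ (by positivity)]
    nlinarith [he_pos n]
  set s : ℕ → ℝ → ℝ := fun n t => if t < θ₀ then t + e n else t - e n with hs
  have hs_meas : ∀ n, Measurable (s n) := fun n =>
    Measurable.ite (measurableSet_lt measurable_id measurable_const)
      (measurable_id.add_const _) (measurable_id.sub_const _)
  have hs_mem : ∀ n, ∀ t ∈ B, s n t ∈ B := by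
    intro n t ht
    rw [hBdef, Metric.mem_ball, Real.dist_eq] at ht ⊢
    simp only [hs]
    have h1 := he_pos n
    have h2 := he_lt n
    rw [abs_lt] at ht
    split <;> rw [abs_lt] <;> constructor <;> linarith
  have hs_ne : ∀ n t, s n t ≠ t := by
    intro n t
    have := he_pos n
    simp only [hs]
    split <;> intro h <;> nlinarith [h]
  have hs_tendsto : ∀ t, Tendsto (fun n => s n t) atTop (𝓝[≠] t) := by
    intro t
    rw [tendsto_nhdsWithin_iff]
    refine ⟨?_, Filter.Eventually.of_forall fun n => hs_ne n t⟩
    rw [tendsto_iff_dist_tendsto_zero]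
    have hd : ∀ n, dist (s n t) t = e n := by
      intro n
      rw [Real.dist_eq]
      simp only [hs]
      split
      · have : t + e n - t = e n := by ring
        rw [this, abs_of_pos (he_pos n)]
      · have : t - e n - t = -(e n) := by ring
        rw [this, abs_neg, abs_of_pos (he_pos n)]
    have h2 : Tendsto (fun n : ℕ => ε / ((n:ℝ)+2)) atTop (𝓝 0) := by
      refine ((tendsto_const_div_atTop_nhds_zero_nat ε).comp (tendsto_add_atTop_nat 2)).congr ?_
      intro n
      simp only [Function.comp]
      push_cast
      ring
    exact h2.congr fun n => (hd n).symm
  -- joint a.e.-measurability of the shifted functions and difference quotients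
  have hFs : ∀ n, AEMeasurable (fun q : ℝ × P => Real.exp (x (s n q.1) q.2)) ν := fun n =>
    aux_key_meas hint hcont (s n) (hs_meas n) (hs_mem n)
  set D : ℕ → ℝ × P → ℝ :=
    fun n q => (Real.exp (x (s n q.1) q.2) - Real.exp (x q.1 q.2)) / (s n q.1 - q.1) with hD
  have hD_meas : ∀ n, AEMeasurable (D n) ν := by
    intro n
    exact ((hFs n).sub hF).div
      (((hs_meas n).comp measurable_fst).sub measurable_fst).aemeasurable
  -- a.e. setup for slopes
  have hq_ball : ∀ᵐ q ∂ν, q.1 ∈ B := aux_ae_prod_fst _ _ (ae_restrict_mem measurableSet_ball)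
  have hq_deriv : ∀ᵐ q ∂ν, ∀ θ ∈ B, HasDerivAt (fun θ' => x θ' q.2) (x' θ q.2) θ :=
    aux_ae_prod_snd _ _ hderiv
  have hD_tendsto : ∀ᵐ q ∂ν, Tendsto (fun n => D n q) atTop
      (𝓝 (x' q.1 q.2 * Real.exp (x q.1 q.2))) := by
    filter_upwards [hq_ball, hq_deriv] with q hq1 hq2
    have hde : HasDerivAt (fun u => Real.exp (x u q.2))
        (Real.exp (x q.1 q.2) * x' q.1 q.2) q.1 := (hq2 q.1 hq1).exp
    have hslope := (hasDerivAt_iff_tendsto_slope.mp hde).comp (hs_tendsto q.1)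
    rw [mul_comm]
    refine hslope.congr fun n => ?_
    simp only [Function.comp, slope_def_field, hD]
  have hF' : AEMeasurable (fun q : ℝ × P => x' q.1 q.2 * Real.exp (x q.1 q.2)) ν :=
    aemeasurable_of_tendsto_metrizable_ae _ hD_meas hD_tendsto
  -- swap the bound using Fubini
  have key : ∀ᵐ p ∂μ, ∀ᵐ t ∂ρ, |x' t p * Real.exp (x t p)| ≤ g p := by
    obtain ⟨f₁, hf₁m, hf₁e⟩ : ∃ f₁, Measurable f₁ ∧
        (fun q : ℝ × P => x' q.1 q.2 * Real.exp (x q.1 q.2)) =ᵐ[ν] f₁ :=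
      ⟨hF'.mk _, hF'.measurable_mk, hF'.ae_eq_mk⟩
    obtain ⟨g₁, hg₁m, hg₁e⟩ : ∃ g₁, Measurable g₁ ∧ g =ᵐ[μ] g₁ :=
      ⟨hg.1.mk _, hg.1.stronglyMeasurable_mk.measurable, hg.1.ae_eq_mk⟩
    set B₀ : Set (ℝ × P) := {q | ¬ |f₁ q| ≤ g₁ q.2} with hB₀
    have hB₀m : MeasurableSet B₀ :=
      (measurableSet_le hf₁m.abs (hg₁m.comp measurable_snd)).compl
    have hB₀0 : ν B₀ = 0 := by
      rw [hν, Measure.prod_apply hB₀m]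
      have hz : ∀ᵐ t ∂ρ, μ (Prod.mk t ⁻¹' B₀) = 0 := by
        filter_upwards [Measure.ae_ae_of_ae_prod hf₁e, ae_restrict_mem measurableSet_ball]
          with t ht htB
        have h6 : ∀ᵐ p ∂μ, |f₁ (t, p)| ≤ g₁ p := by
          filter_upwards [ht, hbound t htB, hg₁e] with p hp1 hp2 hp3
          rw [← hp1, ← hp3]
          exact hp2
        rw [show Prod.mk t ⁻¹' B₀ = {p | ¬ |f₁ (t, p)| ≤ g₁ p} from rfl, ← ae_iff] at *
        exact h6
      rw [lintegral_congr_ae hz, lintegral_zero]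
    have hswap : (μ.prod ρ) (Prod.swap ⁻¹' B₀) = 0 := by
      rw [← Measure.map_apply measurable_swap hB₀m, Measure.prod_swap]
      exact hB₀0
    have h2 : ∀ᵐ q : P × ℝ ∂(μ.prod ρ), |f₁ (q.2, q.1)| ≤ g₁ q.1 := by
      rw [ae_iff]
      exact hswap
    have h3 := Measure.ae_ae_of_ae_prod h2
    obtain ⟨N, hNsub, hNm, hN0⟩ := exists_measurable_superset_of_null (ae_iff.mp hf₁e)
    have hNswap : (μ.prod ρ) (Prod.swap ⁻¹' N) = 0 := by
      rw [← Measure.map_apply measurable_swap hNm, Measure.prod_swap]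
      exact hN0
    have h4 : ∀ᵐ q : P × ℝ ∂(μ.prod ρ), (q.2, q.1) ∉ N := by
      rw [ae_iff]
      have hset : {q : P × ℝ | ¬ (q.2, q.1) ∉ N} = Prod.swap ⁻¹' N := by
        ext q
        simp [Prod.swap, not_not]
      rw [hset]
      exact hNswap
    have h5 := Measure.ae_ae_of_ae_prod h4
    filter_upwards [h3, h5, hg₁e] with p hp3 hp5 hpg
    filter_upwards [hp3, hp5] with t ht3 ht5
    have heq : x' t p * Real.exp (x t p) = f₁ (t, p) := by
      by_contra hne
      exact ht5 (hNsub hne)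
    rw [heq, hpg]
    exact ht3
  -- a.e. Lipschitz bound
  have hlip : ∀ᵐ p ∂μ, LipschitzOnWith (Real.nnabs (g p))
      (fun θ => Real.exp (x θ p)) B := by
    filter_upwards [key, hderiv] with p hkey hd
    set f : ℝ → ℝ := fun u => Real.exp (x u p) with hf
    have hfd : ∀ θ ∈ B, HasDerivAt f (Real.exp (x θ p) * x' θ p) θ :=
      fun θ hθ => (hd θ hθ).exp
    have hderiv_eq : ∀ θ ∈ B, deriv f θ = Real.exp (x θ p) * x' θ p :=
      fun θ hθ => (hfd θ hθ).deriv
    have hbd' : ∀ᵐ t ∂(volume : Measure ℝ), t ∈ B → |deriv f t| ≤ |g p| := by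
      refine (ae_restrict_iff' measurableSet_ball).mp ?_
      filter_upwards [hkey, ae_restrict_mem measurableSet_ball] with t ht htB
      rw [hderiv_eq t htB, mul_comm]
      exact ht.trans (le_abs_self _)
    refine LipschitzOnWith.of_dist_le_mul fun a ha b hb => ?_
    have hsub : Set.uIcc b a ⊆ B := ((convex_ball θ₀ ε).ordConnected).uIcc_subset hb ha
    have hInt : IntervalIntegrable (deriv f) volume b a := by
      rw [intervalIntegrable_iff]
      have hfin : volume (Set.uIoc b a) < ⊤ := by
        rw [Set.uIoc]
        exact measure_Ioc_lt_top
      refine Integrable.mono' (integrableOn_const (C := |g p|) hfin.ne)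
        (measurable_deriv f).aestronglyMeasurable.restrict ?_
      refine (ae_restrict_iff' measurableSet_uIoc).mpr ?_
      filter_upwards [hbd'] with t ht htI
      exact ht (hsub (Set.uIoc_subset_uIcc htI))
    have hFTC : f a - f b = ∫ t in b..a, deriv f t :=
      (intervalIntegral.integral_eq_sub_of_hasDerivAt (fun t htI => by
        rw [hderiv_eq t (hsub htI)]
        exact (hderiv_eq t (hsub htI)) ▸ hfd t (hsub htI)) hInt).symm
    have hle : ‖∫ t in b..a, deriv f t‖ ≤ |g p| * |a - b| := by
      refine intervalIntegral.norm_integral_le_of_norm_le_const_ae ?_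
      filter_upwards [hbd'] with t ht htI
      exact ht (hsub (Set.uIoc_subset_uIcc htI))
    rw [Real.dist_eq, Real.dist_eq, ← Real.coe_nnabs] at *
    calc |f a - f b| = ‖∫ t in b..a, deriv f t‖ := by rw [hFTC]; rfl
      _ ≤ |g p| * |a - b| := hle
      _ = (Real.nnabs (g p) : ℝ) * |a - b| := by rw [Real.coe_nnabs]
  -- dominated differentiation under the integral
  have hmain := hasDerivAt_integral_of_dominated_loc_of_lip (F := fun θ p => Real.exp (x θ p))
    (F' := fun p => x' θ₀ p * Real.exp (x θ₀ p)) (bound := g) (Metric.ball_mem_nhds θ₀ hε)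
    (Filter.eventually_of_mem (Metric.ball_mem_nhds θ₀ hε)
      (fun θ hθ => (hint θ hθ).aestronglyMeasurable))
    (hint θ₀ hθ₀B) hmeas hlip hg
    (hderiv.mono fun p hp => by
      have := (hp θ₀ hθ₀B).exp
      rwa [mul_comm] at this)
  obtain ⟨-, hZd⟩ := hmain
  have hlog := hZd.log hZ.ne'
  convert hlog using 1
  rw [show (fun p => x' θ₀ p * (Real.exp (x θ₀ p) / ∫ q, Real.exp (x θ₀ q) ∂μ)) =
    fun p => (x' θ₀ p * Real.exp (x θ₀ p)) * (∫ q, Real.exp (x θ₀ q) ∂μ)⁻¹ from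
    funext fun p => by ring]
  rw [integral_mul_const, div_eq_mul_inv]
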